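/- Fix an integer d ≥ 2, γ ∈ (-d, 0), a > 0 and q ≥ 1. For a nonnegative measurable f on ℝ^d with h = f/M, define Γ_{a,q}(f) = (1/2) ∫_{ℝ^d×ℝ^d×S^{d-1}} b(cos θ) exp(a|v-v_*|^q) M(v) M(v_*) (h(v)-h(v')) log(h(v)/h(v')) dσ dv_* dv. Then for every nonnegative measurable f with 0 < D_0(f) and Γ_{a,q}(f) < ∞, one has D_γ(f) ≥ (a^{|γ|/q}/2) · D_0(f) · ( log( 2 Γ_{a,q}(f) / D_0(f) ) )^{γ/q}. -/

import Mathlib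

open MeasureTheory Real
open scoped ENNReal RealInnerProductSpace

noncomputable section

abbrev Rd (d : ℕ) := EuclideanSpace ℝ (Fin d)

/-- The normalized Maxwellian `M(v) = (2π)^{-d/2} exp(-|v|²/2)`. -/
def Maxw (d : ℕ) (v : Rd d) : ℝ := (2 * π) ^ (-(d : ℝ) / 2) * Real.exp (-‖v‖ ^ 2 / 2)

/-- The surface measure on the unit sphere of `ℝ^d`. -/
def sphereMeas (d : ℕ) : Measure (Metric.sphere (0 : Rd d) 1) :=
  (volume : Measure (Rd d)).toSphere

/-- post-collisional velocity `v' = (v+v_*)/2 + (|v-v_*|/2)σ`. -/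
def vpr (d : ℕ) (v vs σ : Rd d) : Rd d := (2 : ℝ)⁻¹ • (v + vs) + (‖v - vs‖ / 2) • σ

/-- post-collisional velocity `v_*' = (v+v_*)/2 - (|v-v_*|/2)σ`. -/
def vspr (d : ℕ) (v vs σ : Rd d) : Rd d := (2 : ℝ)⁻¹ • (v + vs) - (‖v - vs‖ / 2) • σ

/-- `cos θ = ((v-v_*)/|v-v_*|) · σ`. -/
def cosTheta (d : ℕ) (v vs σ : Rd d) : ℝ := ⟪‖v - vs‖⁻¹ • (v - vs), σ⟫

/-- The angular kernel: even, nonnegative, measurable, normalized on the sphere. -/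
def IsAngKernel (d : ℕ) (b : ℝ → ℝ) : Prop :=
  Measurable b ∧ (∀ x, 0 ≤ b x) ∧ (∀ x, b (-x) = b x) ∧
    ∀ e : Rd d, ‖e‖ = 1 →
      (∫ σ : Metric.sphere (0 : Rd d) 1, b ⟪e, (σ : Rd d)⟫ ∂(sphereMeas d)) = 1

/-- The collision frequency `Σ_α(v) = ∫ |v-v_*|^α M(v_*) dv_*`. -/
def collFreq (d : ℕ) (α : ℝ) (v : Rd d) : ℝ := ∫ vs : Rd d, ‖v - vs‖ ^ α * Maxw d vs

/-- The gain operator `K_α f(v)`. -/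
def gainOp (d : ℕ) (b : ℝ → ℝ) (α : ℝ) (f : Rd d → ℝ) (v : Rd d) : ℝ :=
  ∫ vs : Rd d, ∫ σ : Metric.sphere (0 : Rd d) 1,
    ‖v - vs‖ ^ α * b (cosTheta d v vs σ) * f (vpr d v vs σ) * Maxw d (vspr d v vs σ)
      ∂(sphereMeas d)

/-- The entropy production `D_α(f)`, as an element of `[0,∞]`. -/
def entProd (d : ℕ) (b : ℝ → ℝ) (α : ℝ) (f : Rd d → ℝ) : ℝ≥0∞ :=
  2⁻¹ * ∫⁻ v : Rd d, ∫⁻ vs : Rd d, ∫⁻ σ : Metric.sphere (0 : Rd d) 1,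
    ENNReal.ofReal (‖v - vs‖ ^ α * b (cosTheta d v vs σ) * Maxw d v * Maxw d vs *
      ((f (vpr d v vs σ) / Maxw d (vpr d v vs σ) - f v / Maxw d v) *
        Real.log ((f (vpr d v vs σ) / Maxw d (vpr d v vs σ)) / (f v / Maxw d v))))
      ∂(sphereMeas d)

/-- The relative entropy `H(f|M) = ∫ f log (f/M)`. -/
def relEnt (d : ℕ) (f : Rd d → ℝ) : ℝ := ∫ v : Rd d, f v * Real.log (f v / Maxw d v)

/-- `⟨v⟩ = (1+|v|²)^{1/2}`. -/
def jap (d : ℕ) (v : Rd d) : ℝ := Real.sqrt (1 + ‖v‖ ^ 2)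

/-- A solution of the linear Boltzmann equation with initial datum `f₀`. -/
def IsSolution (d : ℕ) (b : ℝ → ℝ) (γ : ℝ) (f : ℝ → Rd d → ℝ) (f₀ : Rd d → ℝ) : Prop :=
  f 0 = f₀ ∧
  (∀ t : ℝ, 0 ≤ t → Integrable (f t) ∧ (∀ v, 0 ≤ f t v) ∧ (∫ v : Rd d, f t v) = 1) ∧
  ∀ᵐ v : Rd d, ∀ t : ℝ, 0 ≤ t →
    HasDerivWithinAt (fun s => f s v)
      (gainOp d b γ (f t) v - collFreq d γ v * f t v) (Set.Ici 0) t

/-- The modified entropy production `Γ_{a,q}(f)` with stretched-exponential weight. -/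
def GammaEnt (d : ℕ) (b : ℝ → ℝ) (a q : ℝ) (f : Rd d → ℝ) : ℝ≥0∞ :=
  2⁻¹ * ∫⁻ v : Rd d, ∫⁻ vs : Rd d, ∫⁻ σ : Metric.sphere (0 : Rd d) 1,
    ENNReal.ofReal (b (cosTheta d v vs σ) * Real.exp (a * ‖v - vs‖ ^ q)
      * Maxw d v * Maxw d vs *
      ((f v / Maxw d v - f (vpr d v vs σ) / Maxw d (vpr d v vs σ)) *
        Real.log ((f v / Maxw d v) / (f (vpr d v vs σ) / Maxw d (vpr d v vs σ)))))
    ∂(sphereMeas d)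


/-! ### Auxiliary lemmas -/

instance (d : ℕ) : IsFiniteMeasure (sphereMeas d) := by unfold sphereMeas; infer_instance

lemma Maxw_pos (d : ℕ) (v : Rd d) : 0 < Maxw d v := by unfold Maxw; positivity

lemma log_div_antisymm (x y : ℝ) : (x - y) * Real.log (x / y) = (y - x) * Real.log (y / x) := by
  rw [← inv_div x y, Real.log_inv]; ring

lemma sub_mul_log_div_nonneg {x y : ℝ} (hx : 0 ≤ x) (hy : 0 ≤ y) :
    0 ≤ (x - y) * Real.log (x / y) := by
  rcases eq_or_lt_of_le hx with h | hx
  · simp [← h]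
  rcases eq_or_lt_of_le hy with h | hy
  · simp [← h]
  rcases le_total x y with h | h
  · nlinarith [Real.log_nonpos (by positivity : (0:ℝ) ≤ x / y) ((div_le_one hy).mpr h)]
  · exact mul_nonneg (by linarith) (Real.log_nonneg ((one_le_div hy).mpr h))

lemma vpr_self (d : ℕ) (v σ : Rd d) : vpr d v v σ = v := by
  unfold vpr
  rw [sub_self, norm_zero]
  simp [smul_add, ← two_smul ℝ v, smul_smul]

/-- The common "core" of the entropy production integrands. -/
def coreF (d : ℕ) (b : ℝ → ℝ) (f : Rd d → ℝ) (v vs : Rd d)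
    (σ : Metric.sphere (0 : Rd d) 1) : ℝ :=
  b (cosTheta d v vs σ) * Maxw d v * Maxw d vs *
    ((f (vpr d v vs σ) / Maxw d (vpr d v vs σ) - f v / Maxw d v) *
      Real.log ((f (vpr d v vs σ) / Maxw d (vpr d v vs σ)) / (f v / Maxw d v)))

lemma entProd_eq (d : ℕ) (b : ℝ → ℝ) (α : ℝ) (f : Rd d → ℝ) :
    entProd d b α f = 2⁻¹ * ∫⁻ v : Rd d, ∫⁻ vs : Rd d,
      ∫⁻ σ : Metric.sphere (0 : Rd d) 1,
        ENNReal.ofReal (‖v - vs‖ ^ α * coreF d b f v vs σ) ∂(sphereMeas d) := by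
  unfold entProd coreF
  congr 1
  refine lintegral_congr fun v => lintegral_congr fun vs => lintegral_congr fun σ => ?_
  congr 1; ring

lemma gammaEnt_eq (d : ℕ) (b : ℝ → ℝ) (a q : ℝ) (f : Rd d → ℝ) :
    GammaEnt d b a q f = 2⁻¹ * ∫⁻ v : Rd d, ∫⁻ vs : Rd d,
      ∫⁻ σ : Metric.sphere (0 : Rd d) 1,
        ENNReal.ofReal (Real.exp (a * ‖v - vs‖ ^ q) * coreF d b f v vs σ) ∂(sphereMeas d) := by
  unfold GammaEnt coreF
  congr 1
  refine lintegral_congr fun v => lintegral_congr fun vs => lintegral_congr fun σ => ?_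
  rw [log_div_antisymm]
  congr 1; ring

lemma coreF_measurable (d : ℕ) {b : ℝ → ℝ} {f : Rd d → ℝ}
    (hbm : Measurable b) (hfm : Measurable f) :
    Measurable (fun p : Rd d × Rd d × Metric.sphere (0 : Rd d) 1 =>
      coreF d b f p.1 p.2.1 p.2.2) := by
  have hM : Measurable (Maxw d) := (by unfold Maxw; fun_prop : Continuous (Maxw d)).measurable
  have hσ : Measurable (fun p : Rd d × Rd d × Metric.sphere (0 : Rd d) 1 => (p.2.2 : Rd d)) :=
    continuous_subtype_val.measurable.comp measurable_snd.snd
  have hsub : Measurable (fun p : Rd d × Rd d × Metric.sphere (0 : Rd d) 1 => p.1 - p.2.1) :=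
    measurable_fst.sub measurable_snd.fst
  have hnorm : Measurable (fun p : Rd d × Rd d × Metric.sphere (0 : Rd d) 1 => ‖p.1 - p.2.1‖) :=
    hsub.norm
  have hvpr : Measurable (fun p : Rd d × Rd d × Metric.sphere (0 : Rd d) 1 =>
      vpr d p.1 p.2.1 p.2.2) := by
    unfold vpr
    exact ((measurable_fst.add measurable_snd.fst).const_smul (2 : ℝ)⁻¹).add
      ((hnorm.div_const 2).smul hσ)
  have hcos : Measurable (fun p : Rd d × Rd d × Metric.sphere (0 : Rd d) 1 =>
      cosTheta d p.1 p.2.1 p.2.2) := by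
    unfold cosTheta
    exact (hnorm.inv.smul hsub).inner hσ
  exact ((((hbm.comp hcos).mul (hM.comp measurable_fst)).mul
    (hM.comp measurable_snd.fst)).mul
    ((((hfm.comp hvpr).div (hM.comp hvpr)).sub
      ((hfm.comp measurable_fst).div (hM.comp measurable_fst))).mul
      (Real.measurable_log.comp (((hfm.comp hvpr).div (hM.comp hvpr)).div
        ((hfm.comp measurable_fst).div (hM.comp measurable_fst))))))

/-- The iterated triple lower integral. -/
def tripleInt (d : ℕ) (G : Rd d × Rd d × Metric.sphere (0 : Rd d) 1 → ℝ≥0∞) : ℝ≥0∞ :=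
  ∫⁻ v : Rd d, ∫⁻ vs : Rd d, ∫⁻ σ : Metric.sphere (0 : Rd d) 1, G (v, vs, σ) ∂(sphereMeas d)

lemma tripleInt_mono {d : ℕ} {G1 G2 : Rd d × Rd d × Metric.sphere (0 : Rd d) 1 → ℝ≥0∞}
    (h : ∀ p, G1 p ≤ G2 p) : tripleInt d G1 ≤ tripleInt d G2 :=
  lintegral_mono fun v => lintegral_mono fun vs => lintegral_mono fun σ => h (v, vs, σ)

lemma tripleInt_const_mul {d : ℕ} (c : ℝ≥0∞) (hc : c ≠ ⊤)
    (G : Rd d × Rd d × Metric.sphere (0 : Rd d) 1 → ℝ≥0∞) :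
    tripleInt d (fun p => c * G p) = c * tripleInt d G := by
  unfold tripleInt
  simp_rw [lintegral_const_mul' c _ hc]

lemma meas_inner2 {d : ℕ} {G : Rd d × Rd d × Metric.sphere (0 : Rd d) 1 → ℝ≥0∞}
    (hG : Measurable G) (v : Rd d) :
    Measurable (fun vs => ∫⁻ σ, G (v, vs, σ) ∂(sphereMeas d)) := by
  have : Measurable (fun r : Rd d × Metric.sphere (0 : Rd d) 1 => G (v, r.1, r.2)) :=
    hG.comp (measurable_const.prodMk (measurable_fst.prodMk measurable_snd))
  exact this.lintegral_prod_right'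

lemma meas_outer {d : ℕ} {G : Rd d × Rd d × Metric.sphere (0 : Rd d) 1 → ℝ≥0∞}
    (hG : Measurable G) :
    Measurable (fun v => ∫⁻ vs, ∫⁻ σ, G (v, vs, σ) ∂(sphereMeas d)) := by
  have h1 : Measurable (fun pp : (Rd d × Rd d) × Metric.sphere (0 : Rd d) 1 =>
      G (pp.1.1, pp.1.2, pp.2)) :=
    hG.comp ((measurable_fst.fst).prodMk ((measurable_fst.snd).prodMk measurable_snd))
  exact h1.lintegral_prod_right'.lintegral_prod_right'

lemma tripleInt_add {d : ℕ} {G1 G2 : Rd d × Rd d × Metric.sphere (0 : Rd d) 1 → ℝ≥0∞}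
    (h1 : Measurable G1) (h2 : Measurable G2) :
    tripleInt d (fun p => G1 p + G2 p) = tripleInt d G1 + tripleInt d G2 := by
  unfold tripleInt
  have step1 : ∀ v vs, (∫⁻ σ, (G1 (v, vs, σ) + G2 (v, vs, σ)) ∂(sphereMeas d))
      = (∫⁻ σ, G1 (v, vs, σ) ∂(sphereMeas d)) + ∫⁻ σ, G2 (v, vs, σ) ∂(sphereMeas d) := by
    intro v vs
    exact lintegral_add_left (h1.comp (measurable_const.prodMk
      (measurable_const.prodMk measurable_id))) _
  have step2 : ∀ v, (∫⁻ vs, ∫⁻ σ, (G1 (v, vs, σ) + G2 (v, vs, σ)) ∂(sphereMeas d))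
      = (∫⁻ vs, ∫⁻ σ, G1 (v, vs, σ) ∂(sphereMeas d))
        + ∫⁻ vs, ∫⁻ σ, G2 (v, vs, σ) ∂(sphereMeas d) := by
    intro v
    rw [lintegral_congr (step1 v)]
    exact lintegral_add_left (meas_inner2 h1 v) _
  rw [lintegral_congr step2]
  exact lintegral_add_left (meas_outer h1) _

lemma pointwise_key {γ a q r c R : ℝ} (hγ : γ < 0) (ha : 0 < a) (hq0 : 0 ≤ q)
    (hr : 0 < r) (hc : 0 ≤ c) (hR : 0 ≤ R) (hc0 : R = 0 → c = 0) :
    ENNReal.ofReal c ≤ ENNReal.ofReal (r ^ (-γ) * (R ^ γ * c))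
      + ENNReal.ofReal (Real.exp (-(a * r ^ q)) * (Real.exp (a * R ^ q) * c)) := by
  rcases le_total R r with h | h
  · rcases eq_or_lt_of_le hR with h0 | hR0
    · simp [hc0 h0.symm]
    · refine le_add_right (ENNReal.ofReal_le_ofReal ?_)
      have key : r ^ (-γ) * R ^ γ = (R / r) ^ γ := by
        rw [Real.div_rpow hR hr.le, Real.rpow_neg hr.le, inv_mul_eq_div]
      have h1 : 1 ≤ r ^ (-γ) * R ^ γ := by
        rw [key]
        exact Real.one_le_rpow_of_pos_of_le_one_of_nonpos (div_pos hR0 hr)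
          ((div_le_one hr).mpr h) hγ.le
      calc c = 1 * c := (one_mul c).symm
        _ ≤ r ^ (-γ) * R ^ γ * c := mul_le_mul_of_nonneg_right h1 hc
        _ = r ^ (-γ) * (R ^ γ * c) := mul_assoc _ _ _
  · refine le_add_left (ENNReal.ofReal_le_ofReal ?_)
    have hpow : r ^ q ≤ R ^ q := Real.rpow_le_rpow hr.le h hq0
    have h1 : 1 ≤ Real.exp (-(a * r ^ q)) * Real.exp (a * R ^ q) := by
      rw [← Real.exp_add]
      apply Real.one_le_exp
      nlinarith
    calc c = 1 * c := (one_mul c).symm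
      _ ≤ Real.exp (-(a * r ^ q)) * Real.exp (a * R ^ q) * c :=
          mul_le_mul_of_nonneg_right h1 hc
      _ = _ := mul_assoc _ _ _


/-- logarithmic interpolation between `D_γ`, `D_0` and `Γ_{a,q}`. -/
theorem entropy_production_log_interpolation (d : ℕ) (hd : 2 ≤ d) (γ : ℝ)
    (hγl : -(d : ℝ) < γ) (hγu : γ < 0) (a q : ℝ) (ha : 0 < a) (hq : 1 ≤ q)
    (b : ℝ → ℝ) (hb : IsAngKernel d b)
    (f : Rd d → ℝ) (hfm : Measurable f) (hfnn : ∀ v, 0 ≤ f v)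
    (hD0 : 0 < entProd d b 0 f) (hGam : GammaEnt d b a q f < ⊤) :
    ENNReal.ofReal (a ^ (|γ| / q) / 2 * (entProd d b 0 f).toReal *
        Real.log (2 * (GammaEnt d b a q f).toReal / (entProd d b 0 f).toReal) ^ (γ / q))
      ≤ entProd d b γ f := by
  obtain ⟨hbm, hbnn, -, -⟩ := hb
  have hMpos := Maxw_pos d
  have hcnn : ∀ v vs σ, 0 ≤ coreF d b f v vs σ := fun v vs σ =>
    mul_nonneg (mul_nonneg (mul_nonneg (hbnn _) (hMpos v).le) (hMpos vs).le)
      (sub_mul_log_div_nonneg (div_nonneg (hfnn _) (hMpos _).le)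
        (div_nonneg (hfnn _) (hMpos _).le))
  have hczero : ∀ (v vs : Rd d) (σ : Metric.sphere (0 : Rd d) 1),
      ‖v - vs‖ = 0 → coreF d b f v vs σ = 0 := by
    intro v vs σ h
    have hveq : v = vs := by rwa [norm_sub_eq_zero_iff] at h
    subst hveq
    simp [coreF, vpr_self, sub_self]
  have hcore_m := coreF_measurable d hbm hfm
  have hmR : Measurable (fun p : Rd d × Rd d × Metric.sphere (0 : Rd d) 1 =>
      ‖p.1 - p.2.1‖) := (measurable_fst.sub measurable_snd.fst).norm
  have hDrw : ∀ α : ℝ, entProd d b α f = 2⁻¹ * tripleInt d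
      (fun p => ENNReal.ofReal (‖p.1 - p.2.1‖ ^ α * coreF d b f p.1 p.2.1 p.2.2)) :=
    fun α => by rw [entProd_eq]; rfl
  have hGrw : GammaEnt d b a q f = 2⁻¹ * tripleInt d
      (fun p => ENNReal.ofReal (Real.exp (a * ‖p.1 - p.2.1‖ ^ q)
        * coreF d b f p.1 p.2.1 p.2.2)) := by rw [gammaEnt_eq]; rfl
  have hD0Γ : entProd d b 0 f ≤ GammaEnt d b a q f := by
    rw [hDrw 0, hGrw]
    refine mul_le_mul_right (tripleInt_mono fun p => ?_) _
    apply ENNReal.ofReal_le_ofReal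
    rw [Real.rpow_zero, one_mul]
    exact le_mul_of_one_le_left (hcnn _ _ _)
      (Real.one_le_exp (by positivity))
  have hD0top : entProd d b 0 f ≠ ⊤ := (hD0Γ.trans_lt hGam).ne
  set D0r := (entProd d b 0 f).toReal with hD0rdef
  set Gr := (GammaEnt d b a q f).toReal with hGrdef
  have hD0rpos : 0 < D0r := ENNReal.toReal_pos hD0.ne' hD0top
  have hGrD0 : D0r ≤ Gr := ENNReal.toReal_mono hGam.ne hD0Γ
  have hGrpos : 0 < Gr := lt_of_lt_of_le hD0rpos hGrD0
  set K := 2 * Gr / D0r with hKdef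
  have hK1 : 1 < K := by
    rw [hKdef, lt_div_iff₀ hD0rpos]; nlinarith
  have hlogK : 0 < Real.log K := Real.log_pos hK1
  have hq0 : 0 < q := lt_of_lt_of_le one_pos hq
  set r := (Real.log K / a) ^ (1 / q) with hrdef
  have hrpos : 0 < r := Real.rpow_pos_of_pos (div_pos hlogK ha) _
  have hrq : r ^ q = Real.log K / a := by
    rw [hrdef, ← Real.rpow_mul (div_pos hlogK ha).le, one_div_mul_cancel hq0.ne',
      Real.rpow_one]
  have hexp : Real.exp (-(a * r ^ q)) = D0r / (2 * Gr) := by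
    have haux : a * (Real.log K / a) = Real.log K := by field_simp
    rw [hrq, haux, Real.exp_neg, Real.exp_log (by positivity : (0:ℝ) < K), hKdef, inv_div]
  -- main pointwise + integral inequality
  have hu_m : Measurable (fun p : Rd d × Rd d × Metric.sphere (0 : Rd d) 1 =>
      ENNReal.ofReal (r ^ (-γ) * (‖p.1 - p.2.1‖ ^ γ * coreF d b f p.1 p.2.1 p.2.2))) :=
    ENNReal.measurable_ofReal.comp
      (measurable_const.mul ((by fun_prop : Measurable (fun p : Rd d × Rd d × Metric.sphere (0 : Rd d) 1 => ‖p.1 - p.2.1‖ ^ γ)).mul hcore_m))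
  have hw_m : Measurable (fun p : Rd d × Rd d × Metric.sphere (0 : Rd d) 1 =>
      ENNReal.ofReal (Real.exp (-(a * r ^ q)) *
        (Real.exp (a * ‖p.1 - p.2.1‖ ^ q) * coreF d b f p.1 p.2.1 p.2.2))) :=
    ENNReal.measurable_ofReal.comp
      (measurable_const.mul ((Real.measurable_exp.comp
        (measurable_const.mul (by fun_prop : Measurable (fun p : Rd d × Rd d × Metric.sphere (0 : Rd d) 1 => ‖p.1 - p.2.1‖ ^ q)))).mul hcore_m))
  have key : tripleInt d (fun p => ENNReal.ofReal
        (‖p.1 - p.2.1‖ ^ (0:ℝ) * coreF d b f p.1 p.2.1 p.2.2))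
      ≤ ENNReal.ofReal (r ^ (-γ)) * tripleInt d (fun p =>
          ENNReal.ofReal (‖p.1 - p.2.1‖ ^ γ * coreF d b f p.1 p.2.1 p.2.2))
        + ENNReal.ofReal (Real.exp (-(a * r ^ q))) * tripleInt d (fun p =>
          ENNReal.ofReal (Real.exp (a * ‖p.1 - p.2.1‖ ^ q)
            * coreF d b f p.1 p.2.1 p.2.2)) := by
    have e1 : (fun p : Rd d × Rd d × Metric.sphere (0 : Rd d) 1 =>
        ENNReal.ofReal (r ^ (-γ) * (‖p.1 - p.2.1‖ ^ γ * coreF d b f p.1 p.2.1 p.2.2)))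
        = fun p => ENNReal.ofReal (r ^ (-γ)) *
            ENNReal.ofReal (‖p.1 - p.2.1‖ ^ γ * coreF d b f p.1 p.2.1 p.2.2) :=
      funext fun p => ENNReal.ofReal_mul (Real.rpow_nonneg hrpos.le _)
    have e2 : (fun p : Rd d × Rd d × Metric.sphere (0 : Rd d) 1 =>
        ENNReal.ofReal (Real.exp (-(a * r ^ q)) *
          (Real.exp (a * ‖p.1 - p.2.1‖ ^ q) * coreF d b f p.1 p.2.1 p.2.2)))
        = fun p => ENNReal.ofReal (Real.exp (-(a * r ^ q))) *
            ENNReal.ofReal (Real.exp (a * ‖p.1 - p.2.1‖ ^ q)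
              * coreF d b f p.1 p.2.1 p.2.2) :=
      funext fun p => ENNReal.ofReal_mul (Real.exp_nonneg _)
    calc tripleInt d (fun p => ENNReal.ofReal
          (‖p.1 - p.2.1‖ ^ (0:ℝ) * coreF d b f p.1 p.2.1 p.2.2))
        ≤ tripleInt d (fun p =>
            ENNReal.ofReal (r ^ (-γ) * (‖p.1 - p.2.1‖ ^ γ * coreF d b f p.1 p.2.1 p.2.2))
            + ENNReal.ofReal (Real.exp (-(a * r ^ q)) *
                (Real.exp (a * ‖p.1 - p.2.1‖ ^ q) * coreF d b f p.1 p.2.1 p.2.2))) := by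
          refine tripleInt_mono fun p => ?_
          rw [Real.rpow_zero, one_mul]
          exact pointwise_key hγu ha hq0.le hrpos (hcnn _ _ _) (norm_nonneg _)
            (hczero p.1 p.2.1 p.2.2)
      _ = _ := by
          rw [tripleInt_add hu_m hw_m, e1, e2,
            tripleInt_const_mul _ ENNReal.ofReal_ne_top,
            tripleInt_const_mul _ ENNReal.ofReal_ne_top]
  have key2 : entProd d b 0 f ≤ ENNReal.ofReal (r ^ (-γ)) * entProd d b γ f
      + ENNReal.ofReal (Real.exp (-(a * r ^ q))) * GammaEnt d b a q f := by
    rw [hDrw 0, hDrw γ, hGrw]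
    calc 2⁻¹ * tripleInt d (fun p => ENNReal.ofReal
          (‖p.1 - p.2.1‖ ^ (0:ℝ) * coreF d b f p.1 p.2.1 p.2.2))
        ≤ 2⁻¹ * (ENNReal.ofReal (r ^ (-γ)) * tripleInt d (fun p =>
            ENNReal.ofReal (‖p.1 - p.2.1‖ ^ γ * coreF d b f p.1 p.2.1 p.2.2))
          + ENNReal.ofReal (Real.exp (-(a * r ^ q))) * tripleInt d (fun p =>
            ENNReal.ofReal (Real.exp (a * ‖p.1 - p.2.1‖ ^ q)
              * coreF d b f p.1 p.2.1 p.2.2))) := mul_le_mul_right key _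
      _ = _ := by ring
  have hsecond : ENNReal.ofReal (Real.exp (-(a * r ^ q))) * GammaEnt d b a q f
      = ENNReal.ofReal (D0r / 2) := by
    rw [hexp, ← ENNReal.ofReal_toReal hGam.ne, ← hGrdef,
      ← ENNReal.ofReal_mul (by positivity)]
    congr 1
    field_simp
  have hD0eq : entProd d b 0 f = ENNReal.ofReal D0r :=
    (ENNReal.ofReal_toReal hD0top).symm
  have key3 : ENNReal.ofReal (D0r / 2) ≤ ENNReal.ofReal (r ^ (-γ)) * entProd d b γ f := by
    have hsplitD0 : ENNReal.ofReal D0r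
        = ENNReal.ofReal (D0r / 2) + ENNReal.ofReal (D0r / 2) := by
      rw [← ENNReal.ofReal_add (by positivity) (by positivity)]
      congr 1; ring
    have h := key2
    rw [hD0eq, hsecond, hsplitD0] at h
    exact (ENNReal.add_le_add_iff_right ENNReal.ofReal_ne_top).mp h
  have hfin : ENNReal.ofReal (r ^ γ) * ENNReal.ofReal (D0r / 2) ≤ entProd d b γ f := by
    calc ENNReal.ofReal (r ^ γ) * ENNReal.ofReal (D0r / 2)
        ≤ ENNReal.ofReal (r ^ γ) * (ENNReal.ofReal (r ^ (-γ)) * entProd d b γ f) :=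
          mul_le_mul_right key3 _
      _ = ENNReal.ofReal (r ^ γ) * ENNReal.ofReal (r ^ (-γ)) * entProd d b γ f :=
          (mul_assoc _ _ _).symm
      _ = entProd d b γ f := by
          rw [← ENNReal.ofReal_mul (Real.rpow_nonneg hrpos.le _),
            ← Real.rpow_add hrpos, add_neg_cancel, Real.rpow_zero,
            ENNReal.ofReal_one, one_mul]
  have hrγ : r ^ γ = a ^ (|γ| / q) * Real.log K ^ (γ / q) := by
    rw [hrdef, ← Real.rpow_mul (div_pos hlogK ha).le, one_div, inv_mul_eq_div,
      Real.div_rpow hlogK.le ha.le, abs_of_neg hγu, neg_div, Real.rpow_neg ha.le]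
    ring
  calc ENNReal.ofReal (a ^ (|γ| / q) / 2 * D0r * Real.log K ^ (γ / q))
      = ENNReal.ofReal (r ^ γ * (D0r / 2)) := by rw [hrγ]; congr 1; ring
    _ = ENNReal.ofReal (r ^ γ) * ENNReal.ofReal (D0r / 2) :=
        ENNReal.ofReal_mul (Real.rpow_nonneg hrpos.le _)
    _ ≤ entProd d b γ f := hfin
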